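/- For every coherent sequence (ω_n)_n ∈ Ω and all indices n ≤ k: (i) the word φ_n∘φ_{n+1}∘⋯∘φ_{k−1}(ω'_k), regarded as a finite sequence of letters, is a sublist (subsequence, not necessarily contiguous) of ω_n; and (ii) φ_n∘φ_{n+1}∘⋯∘φ_{k−1}(ω'_k) is a sublist of φ_n∘φ_{n+1}∘⋯∘φ_{k−1}∘φ_k(ω'_{k+1}). (For n = k the composite of the φ's is the identity.) -/

import Mathlib

open Classical
noncomputable section

namespace GCG

/-- One-step backtrack reduction of a word: replace some substring `u v u` by `u`. -/
def ReduceStep {V : Type*} (l r : List V) : Prop :=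
  ∃ (p s : List V) (u v : V), l = p ++ [u, v, u] ++ s ∧ r = p ++ [u] ++ s

/-- A word is reduced if it admits no one-step reduction. -/
def IsReduced {V : Type*} (l : List V) : Prop := ∀ r, ¬ ReduceStep l r

/-- The reduction `ω'` of a word: the (for words in a simple graph, unique) reduced
word obtained from it by repeatedly replacing substrings `u v u` by `u`. -/
def reduce {V : Type*} (l : List V) : List V :=
  if h : ∃ r, Relation.ReflTransGen ReduceStep l r ∧ IsReduced r then h.choose else l

/-- Compress every maximal constant substring `u u ⋯ u` to the single letter `u`. -/
def compress {V : Type*} : List V → List V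
  | [] => []
  | [a] => [a]
  | a :: b :: t => if a = b then compress (b :: t) else a :: compress (b :: t)

/-- Delete–Replace–Compress along `f`: delete the letters sent into `S`
(the subdivision points), replace the remaining letters by their images,
and compress maximal constant substrings. -/
def DRC {V' V S : Type*} (f : V' → V ⊕ S) (w : List V') : List V :=
  compress (w.filterMap fun v => (f v).getLeft?)

/-- A word in a simple graph: a finite list of vertices in which consecutive
letters are distinct and joined by an edge. -/
def IsWord {V : Type*} (G : SimpleGraph V) (l : List V) : Prop := l.Chain' G.Adj

/-- A loop word at `x`: a word that starts and ends with `x`. -/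
def IsLoopWord {V : Type*} (G : SimpleGraph V) (x : V) (l : List V) : Prop :=
  l.Chain' G.Adj ∧ l.head? = some x ∧ l.getLast? = some x

/-- Concatenation of loop words: the duplicated base letter is dropped. -/
def lconcat {V : Type*} (ω ξ : List V) : List V := ω.dropLast ++ ξ

/-- `Gs` (on vertex set `V ⊕ S`) is the subdivision of `G` in which every edge is
evenly subdivided into `d` edges: every edge of `G` is replaced by a path of
length `d` through fresh interior vertices from `S`, these paths are compatible
with edge reversal, their interiors are pairwise disjoint, they exhaust `S`, and
their steps are exactly the edges of `Gs`. -/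
def IsEvenSubdivision {V S : Type*} (G : SimpleGraph V) (d : ℕ)
    (Gs : SimpleGraph (V ⊕ S)) : Prop :=
  ∃ P : G.Dart → Fin (d + 1) → V ⊕ S,
    (∀ e, P e 0 = Sum.inl e.toProd.1) ∧
    (∀ e, P e (Fin.last d) = Sum.inl e.toProd.2) ∧
    (∀ e (i : Fin (d + 1)), 0 < i.val → i.val < d → ∃ s : S, P e i = Sum.inr s) ∧
    (∀ e, Function.Injective (P e)) ∧
    (∀ e (i : Fin (d + 1)), P e.symm i = P e i.rev) ∧
    (∀ s : S, ∃ e i, P e i = Sum.inr s) ∧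
    (∀ e e' (i i' : Fin (d + 1)), 0 < i.val → i.val < d → P e i = P e' i' →
      (e' = e ∧ i' = i) ∨ (e' = e.symm ∧ i' = i.rev)) ∧
    (∀ a b, Gs.Adj a b ↔ ∃ e, ∃ i : Fin d, P e i.castSucc = a ∧ P e i.succ = b)

/-- The inverse sequence of finite connected simple graphs `X_n` with even
subdivisions `X*_n` and simplicial bonding surjections `f_n : X_{n+1} → X*_n`
mapping every edge onto an edge, together with coherent base vertices `x_n`. -/
structure GraphTower where
  V : ℕ → Type
  S : ℕ → Type
  finV : ∀ n, Finite (V n)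
  G : ∀ n, SimpleGraph (V n)
  conn : ∀ n, (G n).Connected
  d : ℕ → ℕ
  two_le_d : ∀ n, 2 ≤ d n
  Gs : ∀ n, SimpleGraph (V n ⊕ S n)
  subdiv : ∀ n, IsEvenSubdivision (G n) (d n) (Gs n)
  f : ∀ n, V (n + 1) → V n ⊕ S n
  f_surj : ∀ n, Function.Surjective (f n)
  f_simplicial : ∀ n ⦃u v⦄, (G (n + 1)).Adj u v → (Gs n).Adj (f n u) (f n v)
  f_edge_surj : ∀ n ⦃a b⦄, (Gs n).Adj a b →
    ∃ u v, (G (n + 1)).Adj u v ∧ f n u = a ∧ f n v = b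
  x : ∀ n, V n
  f_base : ∀ n, f n (x (n + 1)) = Sum.inl (x n)

namespace GraphTower

/-- The projection `φ_n = DRC_n`. -/
def phi (T : GraphTower) (n : ℕ) : List (T.V (n + 1)) → List (T.V n) := DRC (T.f n)

/-- The composite projection `φ_n ∘ φ_{n+1} ∘ ⋯ ∘ φ_{n+m-1}` (the identity for `m = 0`). -/
def proj (T : GraphTower) (n : ℕ) : (m : ℕ) → List (T.V (n + m)) → List (T.V n)
  | 0, w => w
  | m + 1, w => T.proj n m (T.phi (n + m) w)

/-- Membership in `Ω = lim←(Ω_n, φ_n)`: a coherent sequence of loop words. -/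
def MemOmega (T : GraphTower) (ω : ∀ n, List (T.V n)) : Prop :=
  (∀ n, IsLoopWord (T.G n) (T.x n) (ω n)) ∧ ∀ n, T.phi n (ω (n + 1)) = ω n

/-- Membership in `G = lim←(Ω'_n, φ'_n)`: a `φ'`-coherent sequence of reduced loop words. -/
def MemG (T : GraphTower) (g : ∀ n, List (T.V n)) : Prop :=
  (∀ n, IsLoopWord (T.G n) (T.x n) (g n) ∧ IsReduced (g n)) ∧
    ∀ n, reduce (T.phi n (g (n + 1))) = g n

/-- A sequence is locally eventually constant if for every fixed level `n` the
unreduced projections of its later terms to level `n` are eventually constant. -/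
def LEC (T : GraphTower) (g : ∀ n, List (T.V n)) : Prop :=
  ∀ n, ∃ M, ∀ m, M ≤ m → T.proj n m (g (n + m)) = T.proj n M (g (n + M))

/-- `ω` is the stabilization `←g` of `g`: for every level `n`, the projections of
the later terms of `g` to level `n` eventually equal `ω n`. -/
def IsStabilization (T : GraphTower) (g ω : ∀ n, List (T.V n)) : Prop :=
  ∀ n, ∃ M, ∀ m, M ≤ m → T.proj n m (g (n + m)) = ω n

/-- The identity word sequence `(x_n)_n`. -/
def seqOne (T : GraphTower) : ∀ n, List (T.V n) := fun n => [T.x n]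

/-- Termwise concatenation followed by termwise reduction. -/
def seqMul (T : GraphTower) (g h : ∀ n, List (T.V n)) : ∀ n, List (T.V n) :=
  fun n => reduce (lconcat (g n) (h n))

/-- Termwise reversal. -/
def seqInv (T : GraphTower) (g : ∀ n, List (T.V n)) : ∀ n, List (T.V n) :=
  fun n => (g n).reverse

/-- Membership in `←𝒢`: the stabilization of some locally eventually constant
element of `G`. -/
def MemSG (T : GraphTower) (ω : ∀ n, List (T.V n)) : Prop :=
  ∃ g, T.MemG g ∧ T.LEC g ∧ T.IsStabilization g ω

/-- `τ = ω ∗ ξ`: termwise concatenation, followed by termwise reduction,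
followed by stabilization. -/
def star (T : GraphTower) (ω ξ τ : ∀ n, List (T.V n)) : Prop :=
  T.IsStabilization (fun n => reduce (lconcat (ω n) (ξ n))) τ

end GraphTower

end GCG

namespace GCG

variable {V : Type*}

theorem compress_nil : compress ([] : List V) = [] := rfl
theorem compress_singleton (a : V) : compress [a] = [a] := rfl
theorem compress_cons_cons (a b : V) (t : List V) :
    compress (a :: b :: t) = if a = b then compress (b :: t) else a :: compress (b :: t) := rfl

theorem compress_cons (a : V) (t : List V) : ∃ r, compress (a :: t) = a :: r := by
  induction t generalizing a with
  | nil => exact ⟨[], rfl⟩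
  | cons b t ih =>
    rw [compress_cons_cons]
    by_cases h : a = b
    · subst h; simpa using ih a
    · exact ⟨compress (b :: t), by simp [h]⟩

theorem compress_append_cons (X : List V) (a : V) (Y : List V) :
    compress (X ++ a :: Y) = compress (X ++ [a]) ++ (compress (a :: Y)).tail := by
  induction X with
  | nil =>
    obtain ⟨r, hr⟩ := compress_cons a Y
    simp [hr, compress_singleton]
  | cons x X ih =>
    cases X with
    | nil =>
      obtain ⟨r, hr⟩ := compress_cons a Y
      by_cases h : x = a <;>
        simp [compress_cons_cons, h, hr, compress_singleton]
    | cons y X' =>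
      simp only [List.cons_append] at ih
      simp only [List.cons_append, compress_cons_cons]
      by_cases h : x = y <;> simp [h, ih]

theorem compress_getLast? (l : List V) : (compress l).getLast? = l.getLast? := by
  induction l with
  | nil => rfl
  | cons a t ih =>
    cases t with
    | nil => rfl
    | cons b t' =>
      rw [compress_cons_cons]
      by_cases h : a = b
      · rw [if_pos h, ih, List.getLast?_cons_cons]
      · obtain ⟨r, hr⟩ := compress_cons b t'
        rw [if_neg h, hr, List.getLast?_cons_cons, ← hr, ih, List.getLast?_cons_cons]

theorem compress_dedup (X : List V) (a : V) (Y : List V) :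
    compress (X ++ a :: a :: Y) = compress (X ++ a :: Y) := by
  rw [compress_append_cons X a (a :: Y), compress_append_cons X a Y]
  congr 1
  rw [compress_cons_cons, if_pos rfl]

theorem compress_sublist_cons (x : V) (l : List V) :
    (compress l).Sublist (compress (x :: l)) := by
  cases l with
  | nil => simp [compress_nil, compress_singleton]
  | cons b t =>
    rw [compress_cons_cons]
    split
    · exact List.Sublist.refl _
    · exact List.sublist_cons_self _ _

theorem sublist_of_head_ne {l t : List V} {x : V} (h : l.Sublist (x :: t))
    (hx : l.head? ≠ some x) : l.Sublist t := by
  cases h with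
  | cons _ h => exact h
  | cons_cons _ h => simp at hx

theorem compress_mono {l₁ l₂ : List V} (h : l₁.Sublist l₂) :
    (compress l₁).Sublist (compress l₂) := by
  induction l₂ generalizing l₁ with
  | nil => simp_all
  | cons x l₂' ih =>
    cases h with
    | cons _ h => exact (ih h).trans (compress_sublist_cons x _)
    | @cons_cons l₁' _ _ h =>
      cases l₁' with
      | nil =>
        obtain ⟨r, hr⟩ := compress_cons x l₂'
        rw [compress_singleton, hr]
        exact List.cons_sublist_cons.mpr (List.nil_sublist r)
      | cons a t =>
        by_cases hxa : x = a
        · rw [compress_cons_cons, if_pos hxa]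
          exact (ih h).trans (compress_sublist_cons x _)
        · rw [compress_cons_cons, if_neg hxa]
          cases l₂' with
          | nil => simp at h
          | cons b l₂'' =>
            by_cases hxb : x = b
            · subst hxb
              have h' : (a :: t).Sublist l₂'' :=
                sublist_of_head_ne h (by simp [Ne.symm hxa])
              have h2 : (x :: a :: t).Sublist (x :: l₂'') :=
                List.cons_sublist_cons.mpr h'
              have := ih h2
              rw [compress_cons_cons, if_neg hxa] at this
              rwa [compress_cons_cons, if_pos rfl]
            · rw [compress_cons_cons, if_neg hxb]
              exact List.cons_sublist_cons.mpr (ih h)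

theorem ReduceStep.sublist {l r : List V} (h : ReduceStep l r) : r.Sublist l := by
  obtain ⟨p, s, u, v, rfl, rfl⟩ := h
  have : (p ++ ([u] ++ s)).Sublist (p ++ ([u, v, u] ++ s)) :=
    (List.Sublist.refl p).append
      ((List.cons_sublist_cons.mpr (List.nil_sublist [v, u])).append (List.Sublist.refl s))
  simpa [List.append_assoc] using this

theorem rtg_sublist {l m : List V} (h : Relation.ReflTransGen ReduceStep l m) :
    m.Sublist l := by
  induction h with
  | refl => exact List.Sublist.refl _
  | tail _ hstep ih => exact hstep.sublist.trans ih

theorem exists_reduced (l : List V) :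
    ∃ r, Relation.ReflTransGen ReduceStep l r ∧ IsReduced r := by
  by_cases h : IsReduced l
  · exact ⟨l, .refl, h⟩
  · simp only [IsReduced, not_forall, not_not] at h
    obtain ⟨r, hr⟩ := h
    have hlen : r.length < l.length := by
      obtain ⟨p, s, u, v, e1, e2⟩ := hr
      rw [e1, e2]; simp
    obtain ⟨r', h1, h2⟩ := exists_reduced r
    exact ⟨r', .head hr h1, h2⟩
termination_by l.length

theorem reduce_spec (l : List V) :
    Relation.ReflTransGen ReduceStep l (reduce l) ∧ IsReduced (reduce l) := by
  unfold reduce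
  rw [dif_pos (exists_reduced l)]
  exact (exists_reduced l).choose_spec

theorem IsReduced.rtg_eq {r d : List V} (h : IsReduced r)
    (hr : Relation.ReflTransGen ReduceStep r d) : d = r := by
  rcases Relation.ReflTransGen.cases_head hr with h' | ⟨c, hc, _⟩
  · exact h'.symm
  · exact absurd hc (h c)

theorem ReduceStep.cons {l r : List V} (x : V) (h : ReduceStep l r) :
    ReduceStep (x :: l) (x :: r) := by
  obtain ⟨p, s, u, v, rfl, rfl⟩ := h
  exact ⟨x :: p, s, u, v, by simp, by simp⟩

theorem reflGen_cons {l r : List V} (x : V) (h : Relation.ReflGen ReduceStep l r) :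
    Relation.ReflGen ReduceStep (x :: l) (x :: r) := by
  cases h with
  | refl => exact .refl
  | single h => exact .single (h.cons x)

theorem lc0 {u1 v1 : V} {s1 : List V} (p2 : List V) {u2 v2 : V} {s2 : List V}
    (h : [u1, v1, u1] ++ s1 = p2 ++ [u2, v2, u2] ++ s2) :
    ∃ dl, Relation.ReflGen ReduceStep ([u1] ++ s1) dl ∧
      Relation.ReflGen ReduceStep (p2 ++ [u2] ++ s2) dl := by
  match p2 with
  | [] =>
    simp only [List.nil_append, List.cons_append, List.cons.injEq] at h
    obtain ⟨rfl, rfl, _, rfl⟩ := h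
    exact ⟨_, .refl, .refl⟩
  | [a] =>
    simp only [List.cons_append, List.nil_append, List.cons.injEq] at h
    obtain ⟨rfl, rfl, rfl, rfl⟩ := h
    exact ⟨_, .refl, .refl⟩
  | [a, b] =>
    simp only [List.cons_append, List.nil_append, List.cons.injEq] at h
    obtain ⟨rfl, rfl, rfl, rfl⟩ := h
    refine ⟨[u1] ++ s2, .single ⟨[], s2, u1, v2, by simp, by simp⟩,
      .single ⟨[], s2, u1, v1, by simp, by simp⟩⟩
  | a :: b :: c :: p2' =>
    simp only [List.cons_append, List.nil_append, List.cons.injEq] at h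
    obtain ⟨rfl, rfl, rfl, rfl⟩ := h
    refine ⟨[u1] ++ p2' ++ [u2] ++ s2,
      .single ⟨[u1] ++ p2', s2, u2, v2, by simp, by simp⟩,
      .single ⟨[], p2' ++ [u2] ++ s2, u1, v1, by simp, by simp⟩⟩

theorem lc : ∀ (p1 : List V) (u1 v1 : V) (s1 p2 : List V) (u2 v2 : V) (s2 : List V),
    p1 ++ [u1, v1, u1] ++ s1 = p2 ++ [u2, v2, u2] ++ s2 →
    ∃ dl, Relation.ReflGen ReduceStep (p1 ++ [u1] ++ s1) dl ∧
      Relation.ReflGen ReduceStep (p2 ++ [u2] ++ s2) dl := by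
  intro p1
  induction p1 with
  | nil =>
    intro u1 v1 s1 p2 u2 v2 s2 h
    exact lc0 p2 h
  | cons x p1' ih =>
    intro u1 v1 s1 p2 u2 v2 s2 h
    cases p2 with
    | nil =>
      obtain ⟨dl, h1, h2⟩ := lc0 (x :: p1') h.symm
      exact ⟨dl, h2, h1⟩
    | cons y p2' =>
      simp only [List.cons_append, List.cons.injEq] at h
      obtain ⟨rfl, h⟩ := h
      obtain ⟨dl, h1, h2⟩ := ih u1 v1 s1 p2' u2 v2 s2 (by simpa using h)
      exact ⟨x :: dl, by simpa using reflGen_cons x h1, by simpa using reflGen_cons x h2⟩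

theorem step_confluent : ∀ a b c : List V, ReduceStep a b → ReduceStep a c →
    ∃ d, Relation.ReflGen ReduceStep b d ∧ Relation.ReflTransGen ReduceStep c d := by
  intro a b c hb hc
  obtain ⟨p1, s1, u1, v1, rfl, rfl⟩ := hb
  obtain ⟨p2, s2, u2, v2, he, rfl⟩ := hc
  obtain ⟨d, h1, h2⟩ := lc p1 u1 v1 s1 p2 u2 v2 s2 he
  exact ⟨d, h1, h2.to_reflTransGen⟩

theorem reduce_sublist_of_rtg {l q : List V} (h : Relation.ReflTransGen ReduceStep l q) :
    (reduce l).Sublist q := by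
  obtain ⟨h1, h2⟩ := reduce_spec l
  obtain ⟨d, hqd, hrd⟩ := Relation.church_rosser step_confluent h h1
  have hd : d = reduce l := h2.rtg_eq hrd
  exact rtg_sublist (hd ▸ hqd)


section Geometry
variable {V S : Type*} {G : SimpleGraph V} {d : ℕ} {Gs : SimpleGraph (V ⊕ S)}
variable {P : G.Dart → Fin (d + 1) → V ⊕ S}

theorem subdiv_classify (hP0 : ∀ e, P e 0 = Sum.inl e.toProd.1)
    (hPlast : ∀ e, P e (Fin.last d) = Sum.inl e.toProd.2)
    (hPint : ∀ e (i : Fin (d + 1)), 0 < i.val → i.val < d → ∃ s : S, P e i = Sum.inr s)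
    {e : G.Dart} {j : Fin (d + 1)} {a : V} (h : P e j = Sum.inl a) :
    a = e.toProd.1 ∨ a = e.toProd.2 := by
  by_cases h1 : j.val = 0
  · have hj : j = 0 := Fin.ext h1
    rw [hj, hP0] at h
    exact Or.inl (Sum.inl.inj h).symm
  by_cases h2 : j.val = d
  · have hj : j = Fin.last d := Fin.ext (by simpa using h2)
    rw [hj, hPlast] at h
    exact Or.inr (Sum.inl.inj h).symm
  · obtain ⟨s, hs⟩ := hPint e j (Nat.pos_of_ne_zero h1)
      (lt_of_le_of_ne (Nat.lt_succ_iff.mp j.isLt) h2)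
    rw [hs] at h
    cases h

theorem subdiv_interior (hP0 : ∀ e, P e 0 = Sum.inl e.toProd.1)
    (hPlast : ∀ e, P e (Fin.last d) = Sum.inl e.toProd.2)
    {e : G.Dart} {j : Fin (d + 1)} {s : S} (h : P e j = Sum.inr s) :
    0 < j.val ∧ j.val < d := by
  constructor
  · rcases Nat.eq_zero_or_pos j.val with h1 | h1
    · exfalso
      have hj : j = 0 := Fin.ext h1
      rw [hj, hP0] at h; cases h
    · exact h1
  · rcases lt_or_eq_of_le (Nat.lt_succ_iff.mp j.isLt) with h2 | h2
    · exact h2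
    · exfalso
      rw [show j = Fin.last d from Fin.ext (by simpa using h2), hPlast] at h
      cases h

theorem subdiv_step (hPsymm : ∀ e (i : Fin (d + 1)), P e.symm i = P e i.rev)
    (hPdisj : ∀ e e' (i i' : Fin (d + 1)), 0 < i.val → i.val < d → P e i = P e' i' →
      (e' = e ∧ i' = i) ∨ (e' = e.symm ∧ i' = i.rev))
    (hPadj : ∀ a b, Gs.Adj a b ↔ ∃ e, ∃ i : Fin d, P e i.castSucc = a ∧ P e i.succ = b)
    {e : G.Dart} {i : Fin (d + 1)} {y : V ⊕ S} (hi0 : 0 < i.val) (hid : i.val < d)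
    (hadj : Gs.Adj (P e i) y) :
    ∃ j : Fin (d + 1), y = P e j ∧ (j.val + 1 = i.val ∨ j.val = i.val + 1) := by
  obtain ⟨e', j', h1, h2⟩ := (hPadj _ _).1 hadj
  rcases hPdisj e e' i j'.castSucc hi0 hid h1.symm with ⟨rfl, hj⟩ | ⟨rfl, hj⟩
  · refine ⟨j'.succ, h2.symm, Or.inr ?_⟩
    have := congrArg Fin.val hj
    simp only [Fin.coe_castSucc] at this
    simp [Fin.val_succ, this]
  · refine ⟨j'.succ.rev, ?_, Or.inl ?_⟩
    · rw [← h2, hPsymm e j'.succ]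
    · have hv := congrArg Fin.val hj
      simp only [Fin.coe_castSucc, Fin.val_rev] at hv
      have h3 : (j'.succ.rev : ℕ) = d + 1 - (j'.val + 1 + 1) := by
        simp [Fin.val_rev, Fin.val_succ]
      have hjd : j'.val < d := j'.isLt
      omega

theorem subdiv_exit (hP0 : ∀ e, P e 0 = Sum.inl e.toProd.1)
    (hPlast : ∀ e, P e (Fin.last d) = Sum.inl e.toProd.2)
    (hPint : ∀ e (i : Fin (d + 1)), 0 < i.val → i.val < d → ∃ s : S, P e i = Sum.inr s)
    (hPsymm : ∀ e (i : Fin (d + 1)), P e.symm i = P e i.rev)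
    (hPdisj : ∀ e e' (i i' : Fin (d + 1)), 0 < i.val → i.val < d → P e i = P e' i' →
      (e' = e ∧ i' = i) ∨ (e' = e.symm ∧ i' = i.rev))
    (hPadj : ∀ a b, Gs.Adj a b ↔ ∃ e, ∃ i : Fin d, P e i.castSucc = a ∧ P e i.succ = b) :
    ∀ (c : List (V ⊕ S)) (i : Fin (d + 1)) (e : G.Dart), c.Chain' Gs.Adj →
      0 < i.val → i.val < d → c.head? = some (P e i) →
      ∀ a, (c.filterMap Sum.getLeft?).head? = some a →
        a = e.toProd.1 ∨ a = e.toProd.2 := by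
  intro c
  induction c with
  | nil => intro i e _ _ _ h; simp at h
  | cons z c' ih =>
    intro i e hchain hi0 hid hhead a ha
    have hz : z = P e i := by simpa using hhead
    subst hz
    obtain ⟨s0, hs0⟩ := hPint e i hi0 hid
    rw [List.filterMap_cons, hs0] at ha
    simp only [Sum.getLeft?] at ha
    cases c' with
    | nil => simp at ha
    | cons y c'' =>
      have hadj : Gs.Adj (P e i) y := (List.isChain_cons_cons.mp hchain).1
      obtain ⟨j, rfl, hj⟩ := subdiv_step hPsymm hPdisj hPadj hi0 hid hadj
      rcases hy : P e j with b | s'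
      · rw [List.filterMap_cons, hy] at ha
        obtain rfl : b = a := by simpa using ha
        exact subdiv_classify hP0 hPlast hPint hy
      · obtain ⟨hj0, hjd⟩ := subdiv_interior hP0 hPlast hy
        exact ih j e (List.isChain_cons_cons.mp hchain).2 hj0 hjd rfl a ha

end Geometry

theorem ReduceStep.loopWord {V : Type*} {G : SimpleGraph V} {x : V} {l r : List V}
    (hl : IsLoopWord G x l) (h : ReduceStep l r) : IsLoopWord G x r := by
  obtain ⟨p, s, u, v, rfl, rfl⟩ := h
  obtain ⟨hchain, hhead, hlast⟩ := hl
  refine ⟨?_, ?_, ?_⟩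
  · have hchain' : List.Chain' G.Adj (p ++ ([u, v, u] ++ s)) := by
      rwa [← List.append_assoc]
    unfold List.Chain' at hchain'
    rw [List.isChain_append] at hchain'
    obtain ⟨c1, c2, hj⟩ := hchain'
    unfold List.Chain'
    rw [List.append_assoc, List.isChain_append]
    refine ⟨c1, (List.isChain_cons_cons.mp ((List.isChain_cons_cons.mp c2).2)).2, ?_⟩
    intro a ha b hb
    have hb' : u = b := by simpa using hb
    exact hb' ▸ hj a ha u (by simp)
  · cases p with
    | nil => simpa using hhead
    | cons p0 p' => simpa using hhead
  · cases s with
    | nil =>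
      have h1 : (p ++ [u, v, u] ++ ([] : List V)).getLast? = some u := by
        rw [List.append_nil, show p ++ [u, v, u] = (p ++ [u, v]) ++ [u] from by simp,
          List.getLast?_concat]
      have h2 : u = x := Option.some.inj (h1.symm.trans hlast)
      rw [List.append_nil, List.getLast?_concat, h2]
    | cons s0 s' =>
      rw [List.getLast?_append_of_ne_nil _ (List.cons_ne_nil s0 s')] at hlast ⊢
      exact hlast

theorem rtg_loopWord {V : Type*} {G : SimpleGraph V} {x : V} {l m : List V}
    (hl : IsLoopWord G x l) (h : Relation.ReflTransGen ReduceStep l m) :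
    IsLoopWord G x m := by
  induction h with
  | refl => exact hl
  | tail _ hstep ih => exact ReduceStep.loopWord ih hstep

theorem phi_step (T : GraphTower) (k : ℕ) {l r : List (T.V (k + 1))}
    (hl : IsLoopWord (T.G (k + 1)) (T.x (k + 1)) l) (h : ReduceStep l r) :
    Relation.ReflTransGen ReduceStep (T.phi k l) (T.phi k r) := by
  obtain ⟨P, hP0, hPlast, hPint, hPinj, hPsymm, hPsurj, hPdisj, hPadj⟩ := T.subdiv k
  have hd := T.two_le_d k
  obtain ⟨p, s, u, v, rfl, rfl⟩ := h
  obtain ⟨hchain, hhead, hlast⟩ := hl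
  have huv : (T.G (k + 1)).Adj u v := by
    have h3 : List.Chain' (T.G (k + 1)).Adj [u, v, u] := hchain.infix ⟨p, s, rfl⟩
    exact (List.isChain_cons_cons.mp h3).1
  have hFdef : ∀ w : List (T.V (k + 1)),
      T.phi k w = compress (w.filterMap fun z => ((T.f k) z).getLeft?) := fun _ => rfl
  have hfx : T.f k (T.x (k + 1)) = Sum.inl (T.x k) := T.f_base k
  rcases hfu : T.f k u with a | s0
  · rcases hfv : T.f k v with b | s1
    · exfalso
      have hadj : (T.Gs k).Adj (Sum.inl a) (Sum.inl b) := by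
        have h2 := T.f_simplicial k huv
        rwa [hfu, hfv] at h2
      obtain ⟨e, j, hj1, hj2⟩ := (hPadj _ _).1 hadj
      by_cases hj0 : (j : ℕ) = 0
      · obtain ⟨s', hs'⟩ := hPint e j.succ (by simp [Fin.val_succ])
          (by simp only [Fin.val_succ, hj0]; omega)
        rw [hs'] at hj2; cases hj2
      · obtain ⟨s', hs'⟩ := hPint e j.castSucc
          (by simp only [Fin.coe_castSucc]; omega)
          (by simp only [Fin.coe_castSucc]; exact j.isLt)
        rw [hs'] at hj1; cases hj1
    · rw [hFdef, hFdef]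
      have e1 : (p ++ [u, v, u] ++ s).filterMap (fun z => ((T.f k) z).getLeft?)
          = p.filterMap (fun z => ((T.f k) z).getLeft?)
            ++ a :: a :: s.filterMap (fun z => ((T.f k) z).getLeft?) := by
        simp [hfu, hfv]
      have e2 : (p ++ [u] ++ s).filterMap (fun z => ((T.f k) z).getLeft?)
          = p.filterMap (fun z => ((T.f k) z).getLeft?)
            ++ a :: s.filterMap (fun z => ((T.f k) z).getLeft?) := by
        simp [hfu]
      rw [e1, e2, compress_dedup]
  · rcases hfv : T.f k v with b | s1
    · -- MAIN case : f u interior, f v a vertex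
      obtain ⟨e, i, hei⟩ := hPsurj s0
      obtain ⟨hi0, hid⟩ := subdiv_interior hP0 hPlast hei
      have hp : p ≠ [] := by
        rintro rfl
        have hu : u = T.x (k + 1) := by simpa using hhead
        rw [hu, hfx] at hfu
        cases hfu
      have hs : s ≠ [] := by
        rintro rfl
        have h1 : (p ++ [u, v, u] ++ ([] : List (T.V (k + 1)))).getLast? = some u := by
          rw [List.append_nil, show p ++ [u, v, u] = (p ++ [u, v]) ++ [u] from by simp,
            List.getLast?_concat]
        have hu : u = T.x (k + 1) := Option.some.inj (h1.symm.trans hlast)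
        rw [hu, hfx] at hfu
        cases hfu
      have hxp : T.x (k + 1) ∈ p := by
        cases p with
        | nil => exact absurd rfl hp
        | cons p0 p' =>
          have : p0 = T.x (k + 1) := by simpa using hhead
          exact this ▸ List.mem_cons_self (a := p0) (l := p')
      have hslast : s.getLast? = some (T.x (k + 1)) := by
        rw [show p ++ [u, v, u] ++ s = (p ++ [u, v, u]) ++ s from rfl,
          List.getLast?_append_of_ne_nil _ hs] at hlast
        exact hlast
      have hxs : T.x (k + 1) ∈ s := by
        have h2 := List.dropLast_append_getLast? _ (Option.mem_def.mpr hslast)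
        rw [← h2]; simp
      have hFp_ne : p.filterMap (fun z => ((T.f k) z).getLeft?) ≠ [] :=
        List.ne_nil_of_mem (List.mem_filterMap.mpr ⟨_, hxp, by rw [hfx]; rfl⟩)
      have hFs_ne : s.filterMap (fun z => ((T.f k) z).getLeft?) ≠ [] :=
        List.ne_nil_of_mem (List.mem_filterMap.mpr ⟨_, hxs, by rw [hfx]; rfl⟩)
      obtain ⟨aL, haL⟩ : ∃ aL, (p.filterMap (fun z => ((T.f k) z).getLeft?)).getLast? = some aL :=
        ⟨_, List.getLast?_eq_getLast_of_ne_nil hFp_ne⟩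
      obtain ⟨aR, FsT, hFsE⟩ : ∃ aR FsT,
          s.filterMap (fun z => ((T.f k) z).getLeft?) = aR :: FsT := by
        rcases hE : s.filterMap (fun z => ((T.f k) z).getLeft?) with _ | ⟨aR, FsT⟩
        · exact absurd hE hFs_ne
        · exact ⟨aR, FsT, rfl⟩
      -- exit analysis on the right
      have hchain_us : List.Chain' (T.Gs k).Adj (List.map (T.f k) (u :: s)) :=
        List.isChain_map_of_isChain (T.f k) (fun a b hab => T.f_simplicial k hab)
          (hchain.suffix ⟨p ++ [u, v], by simp⟩)
      have haR2 : aR = e.toProd.1 ∨ aR = e.toProd.2 := by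
        refine subdiv_exit hP0 hPlast hPint hPsymm hPdisj hPadj
          (List.map (T.f k) (u :: s)) i e hchain_us hi0 hid ?_ aR ?_
        · simp [hfu, hei]
        · simp [List.filterMap_cons, List.filterMap_map, Function.comp_def, hfu, hFsE, -List.head?_filterMap]
      -- exit analysis on the left
      have hchain_pu : List.Chain' (T.Gs k).Adj ((List.map (T.f k) (p ++ [u])).reverse) := by
        unfold List.Chain'
        rw [List.isChain_reverse]
        exact List.IsChain.imp (fun a b hab => hab.symm)
          (List.isChain_map_of_isChain (T.f k) (fun a b hab => T.f_simplicial k hab)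
            (hchain.prefix ⟨[v, u] ++ s, by simp⟩))
      have haL2 : aL = e.toProd.1 ∨ aL = e.toProd.2 := by
        refine subdiv_exit hP0 hPlast hPint hPsymm hPdisj hPadj
          ((List.map (T.f k) (p ++ [u])).reverse) i e hchain_pu hi0 hid ?_ aL ?_
        · rw [List.head?_reverse]
          simp [hfu, hei]
        · simp [List.filterMap_reverse, List.head?_reverse, List.filterMap_map,
            Function.comp_def, hfu, haL, List.filterMap_cons, -List.head?_filterMap]
      have hb : b = e.toProd.1 ∨ b = e.toProd.2 := by
        have hadj : (T.Gs k).Adj (P e i) (Sum.inl b) := by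
          have h2 := T.f_simplicial k huv
          rwa [hfu, hfv, ← hei] at h2
        obtain ⟨j, hj1, _⟩ := subdiv_step hPsymm hPdisj hPadj hi0 hid hadj
        exact subdiv_classify hP0 hPlast hPint hj1.symm
      have hne : e.toProd.1 ≠ e.toProd.2 := e.adj.ne
      rw [hFdef, hFdef]
      have e1 : (p ++ [u, v, u] ++ s).filterMap (fun z => ((T.f k) z).getLeft?)
          = p.filterMap (fun z => ((T.f k) z).getLeft?)
            ++ b :: s.filterMap (fun z => ((T.f k) z).getLeft?) := by
        simp [hfu, hfv]
      have e2 : (p ++ [u] ++ s).filterMap (fun z => ((T.f k) z).getLeft?)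
          = p.filterMap (fun z => ((T.f k) z).getLeft?)
            ++ s.filterMap (fun z => ((T.f k) z).getLeft?) := by
        simp [hfu]
      rw [e1, e2]
      by_cases hbL : aL = b
      · have hFp_eq : p.filterMap (fun z => ((T.f k) z).getLeft?)
            = (p.filterMap (fun z => ((T.f k) z).getLeft?)).dropLast ++ [b] :=
          (List.dropLast_append_getLast? b (Option.mem_def.mpr (hbL ▸ haL))).symm
        have heq : compress (p.filterMap (fun z => ((T.f k) z).getLeft?)
              ++ b :: s.filterMap (fun z => ((T.f k) z).getLeft?))
            = compress (p.filterMap (fun z => ((T.f k) z).getLeft?)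
              ++ s.filterMap (fun z => ((T.f k) z).getLeft?)) := by
          conv_lhs => rw [hFp_eq]
          conv_rhs => rw [hFp_eq]
          rw [show (p.filterMap (fun z => ((T.f k) z).getLeft?)).dropLast ++ [b]
                ++ b :: s.filterMap (fun z => ((T.f k) z).getLeft?)
              = (p.filterMap (fun z => ((T.f k) z).getLeft?)).dropLast
                ++ b :: b :: s.filterMap (fun z => ((T.f k) z).getLeft?) from by simp,
            compress_dedup,
            show (p.filterMap (fun z => ((T.f k) z).getLeft?)).dropLast ++ [b]
                ++ s.filterMap (fun z => ((T.f k) z).getLeft?)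
              = (p.filterMap (fun z => ((T.f k) z).getLeft?)).dropLast
                ++ b :: s.filterMap (fun z => ((T.f k) z).getLeft?) from by simp]
        rw [heq]
      by_cases hbR : aR = b
      · subst hbR
        rw [hFsE, compress_dedup]
      · -- the genuine reduction step
        have haLR : aL = aR := by
          rcases hb with hb1 | hb1 <;> rcases haL2 with h1 | h1 <;> rcases haR2 with h2 | h2 <;>
            simp_all
        subst haLR
        rw [hFsE]
        have hFp_eq : p.filterMap (fun z => ((T.f k) z).getLeft?)
            = (p.filterMap (fun z => ((T.f k) z).getLeft?)).dropLast ++ [aL] :=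
          (List.dropLast_append_getLast? aL (Option.mem_def.mpr haL)).symm
        set D := (p.filterMap (fun z => ((T.f k) z).getLeft?)).dropLast with hD
        obtain ⟨t, ht⟩ := compress_cons aL FsT
        have hCget : (compress (D ++ [aL])).getLast? = some aL := by
          rw [compress_getLast?, List.getLast?_concat]
        have hC : compress (D ++ [aL]) = (compress (D ++ [aL])).dropLast ++ [aL] :=
          (List.dropLast_append_getLast? aL (Option.mem_def.mpr hCget)).symm
        have hbaL : ¬ (aL = b) := hbL
        have hbaL' : ¬ (b = aL) := fun hh => hbL hh.symm
        have hL : compress (p.filterMap (fun z => ((T.f k) z).getLeft?) ++ b :: aL :: FsT)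
            = (compress (D ++ [aL])).dropLast ++ [aL, b, aL] ++ t := by
          rw [hFp_eq, show D ++ [aL] ++ b :: aL :: FsT = D ++ aL :: (b :: aL :: FsT) from by simp,
            compress_append_cons, compress_cons_cons, if_neg hbaL,
            compress_cons_cons, if_neg hbaL', ht]
          conv_lhs => rw [hC]
          simp
        have hR : compress (p.filterMap (fun z => ((T.f k) z).getLeft?) ++ aL :: FsT)
            = (compress (D ++ [aL])).dropLast ++ [aL] ++ t := by
          rw [hFp_eq, show D ++ [aL] ++ aL :: FsT = D ++ aL :: aL :: FsT from by simp,
            compress_dedup, compress_append_cons, ht]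
          conv_lhs => rw [hC]
          simp
        rw [hL, hR]
        exact Relation.ReflTransGen.single ⟨_, t, aL, b, rfl, rfl⟩
    · rw [hFdef, hFdef]
      have e1 : (p ++ [u, v, u] ++ s).filterMap (fun z => ((T.f k) z).getLeft?)
          = p.filterMap (fun z => ((T.f k) z).getLeft?)
            ++ s.filterMap (fun z => ((T.f k) z).getLeft?) := by
        simp [hfu, hfv]
      have e2 : (p ++ [u] ++ s).filterMap (fun z => ((T.f k) z).getLeft?)
          = p.filterMap (fun z => ((T.f k) z).getLeft?)
            ++ s.filterMap (fun z => ((T.f k) z).getLeft?) := by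
        simp [hfu]
      rw [e1, e2]

theorem phi_rtg (T : GraphTower) (k : ℕ) {l m : List (T.V (k + 1))}
    (hl : IsLoopWord (T.G (k + 1)) (T.x (k + 1)) l)
    (h : Relation.ReflTransGen ReduceStep l m) :
    Relation.ReflTransGen ReduceStep (T.phi k l) (T.phi k m) := by
  induction h with
  | refl => exact .refl
  | tail hlm hstep ih =>
    exact ih.trans (phi_step T k (rtg_loopWord hl hlm) hstep)

theorem phi_mono (T : GraphTower) (k : ℕ) {l₁ l₂ : List (T.V (k + 1))}
    (h : l₁.Sublist l₂) : (T.phi k l₁).Sublist (T.phi k l₂) :=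
  compress_mono (h.filterMap _)

theorem proj_mono (T : GraphTower) (n : ℕ) : ∀ (m : ℕ) {l₁ l₂ : List (T.V (n + m))},
    l₁.Sublist l₂ → (T.proj n m l₁).Sublist (T.proj n m l₂) := by
  intro m
  induction m with
  | zero => intro l₁ l₂ h; exact h
  | succ m ih => intro l₁ l₂ h; exact ih (phi_mono T (n + m) h)

theorem proj_coherent (T : GraphTower) (ω : ∀ n, List (T.V n))
    (hcoh : ∀ n, T.phi n (ω (n + 1)) = ω n) (n : ℕ) :
    ∀ m : ℕ, T.proj n m (ω (n + m)) = ω n := by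
  intro m
  induction m with
  | zero => rfl
  | succ m ih =>
    show T.proj n m (T.phi (n + m) (ω (n + m + 1))) = ω n
    rw [hcoh (n + m)]
    exact ih

/-- For every `(ω_n)_n ∈ Ω` and all levels `n ≤ k` (here `k = n + m`):
(i) `φ_n∘⋯∘φ_{k−1}(ω'_k)` is a sublist (subsequence) of `ω_n`, and
(ii) `φ_n∘⋯∘φ_{k−1}(ω'_k)` is a sublist of `φ_n∘⋯∘φ_k(ω'_{k+1})`.
(For `m = 0` the composite projection is the identity.) -/
theorem statement_2 (T : GraphTower) (ω : ∀ n, List (T.V n)) (hω : T.MemOmega ω)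
    (n m : ℕ) :
    (T.proj n m (reduce (ω (n + m)))).Sublist (ω n) ∧
    (T.proj n m (reduce (ω (n + m)))).Sublist
      (T.proj n (m + 1) (reduce (ω (n + m + 1)))) := by
  obtain ⟨hword, hcoh⟩ := hω
  constructor
  · have h1 := proj_mono T n m (rtg_sublist (reduce_spec (ω (n + m))).1)
    rwa [proj_coherent T ω hcoh n m] at h1
  · have hq : Relation.ReflTransGen ReduceStep (ω (n + m))
        (T.phi (n + m) (reduce (ω (n + m + 1)))) := by
      have h2 := phi_rtg T (n + m) (hword (n + m + 1)) (reduce_spec (ω (n + m + 1))).1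
      rwa [hcoh (n + m)] at h2
    exact proj_mono T n m (reduce_sublist_of_rtg hq)


end GCG
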